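/- arXiv:1906.10614 — 2 statements merged into one kernel-verified Lean document; each statement's English description precedes it below -/
import Mathlib

section
/- Let T be a k-th order n-dimensional nonnegative tensor. Then the spectral radius of T is bounded between the minimum and the maximum row sum: min_i Σ_{i_2,...,i_k} T_{i i_2 ... i_k} ≤ ρ(T) ≤ max_i Σ_{i_2,...,i_k} T_{i i_2 ... i_k}. -/
namespace Stmt4Aux

variable {n d : ℕ}

/-- application of tensor: (T x^{d})_i -/
def appl (T : Fin n → (Fin d → Fin n) → ℝ) (x : Fin n → ℝ) (i : Fin n) : ℝ :=
  ∑ j, T i j * ∏ l, x (j l)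

def rowSum (T : Fin n → (Fin d → Fin n) → ℝ) (i : Fin n) : ℝ := ∑ j, T i j

lemma continuous_appl (T : Fin n → (Fin d → Fin n) → ℝ) (i : Fin n) :
    Continuous fun x : Fin n → ℝ => appl T x i :=
  continuous_finset_sum _ fun j _ =>
    continuous_const.mul (continuous_finset_prod _ fun l _ => continuous_apply (j l))

lemma appl_nonneg {T : Fin n → (Fin d → Fin n) → ℝ} (hT : ∀ i j, 0 ≤ T i j)
    {x : Fin n → ℝ} (hx : ∀ i, 0 ≤ x i) (i : Fin n) : 0 ≤ appl T x i :=
  Finset.sum_nonneg fun j _ => mul_nonneg (hT i j) (Finset.prod_nonneg fun l _ => hx (j l))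

lemma appl_mono {T : Fin n → (Fin d → Fin n) → ℝ} (hT : ∀ i j, 0 ≤ T i j)
    {x y : Fin n → ℝ} (hx : ∀ i, 0 ≤ x i) (hxy : ∀ i, x i ≤ y i) (i : Fin n) :
    appl T x i ≤ appl T y i :=
  Finset.sum_le_sum fun j _ => mul_le_mul_of_nonneg_left
    (Finset.prod_le_prod (fun l _ => hx (j l)) (fun l _ => hxy (j l))) (hT i j)

/-- lower bound of appl by minimal coordinate -/
lemma le_appl {T : Fin n → (Fin d → Fin n) → ℝ} (hT : ∀ i j, 0 ≤ T i j)
    {x : Fin n → ℝ} {c : ℝ} (hc : 0 ≤ c) (hx : ∀ i, c ≤ x i) (i : Fin n) :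
    rowSum T i * c ^ d ≤ appl T x i := by
  rw [rowSum, Finset.sum_mul]
  refine Finset.sum_le_sum fun j _ => ?_
  refine mul_le_mul_of_nonneg_left ?_ (hT i j)
  calc c ^ d = ∏ _l : Fin d, c := by simp
  _ ≤ ∏ l, x (j l) := Finset.prod_le_prod (fun _ _ => hc) (fun l _ => hx (j l))

/-- upper bound of appl by maximal coordinate -/
lemma appl_le {T : Fin n → (Fin d → Fin n) → ℝ} (hT : ∀ i j, 0 ≤ T i j)
    {x : Fin n → ℝ} {c : ℝ} (hx0 : ∀ i, 0 ≤ x i) (hx : ∀ i, x i ≤ c) (i : Fin n) :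
    appl T x i ≤ rowSum T i * c ^ d := by
  rw [rowSum, Finset.sum_mul]
  refine Finset.sum_le_sum fun j _ => ?_
  refine mul_le_mul_of_nonneg_left ?_ (hT i j)
  calc ∏ l, x (j l) ≤ ∏ _l : Fin d, c :=
        Finset.prod_le_prod (fun l _ => hx0 (j l)) (fun l _ => hx (j l))
  _ = c ^ d := by simp

lemma appl_smul (T : Fin n → (Fin d → Fin n) → ℝ) (x : Fin n → ℝ) (c : ℝ) (i : Fin n) :
    appl T (fun m => c * x m) i = c ^ d * appl T x i := by
  unfold appl
  rw [Finset.mul_sum]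
  refine Finset.sum_congr rfl fun j _ => ?_
  rw [Finset.prod_mul_distrib]
  simp [mul_comm, mul_assoc, mul_left_comm]

lemma appl_add_const (T : Fin n → (Fin d → Fin n) → ℝ) (x : Fin n → ℝ) (e : ℝ) (i : Fin n) :
    appl (fun i j => T i j + e) x i = appl T x i + e * (∑ m, x m) ^ d := by
  unfold appl
  have h : (∑ m, x m) ^ d = ∑ j : Fin d → Fin n, ∏ l, x (j l) := by
    calc (∑ m, x m) ^ d = ∏ _l : Fin d, ∑ m, x m := by simp
    _ = _ := by rw [Finset.prod_univ_sum]; simp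
  rw [h, Finset.mul_sum, ← Finset.sum_add_distrib]
  exact Finset.sum_congr rfl fun j _ => by ring


lemma exists_pos_coord (hn : 0 < n) {x : Fin n → ℝ} (hx : x ∈ stdSimplex ℝ (Fin n)) :
    ∃ p, 0 < x p := by
  by_contra h
  push_neg at h
  have : (∑ m, x m) ≤ 0 := Finset.sum_nonpos fun m _ => h m
  rw [hx.2] at this; linarith

/-- any feasible value is at most the max row sum -/
lemma feasible_le_sup (hn : 0 < n) {T : Fin n → (Fin d → Fin n) → ℝ}
    (hT : ∀ i j, 0 ≤ T i j) {x : Fin n → ℝ} (hx : x ∈ stdSimplex ℝ (Fin n))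
    {lam : ℝ} (hfeas : ∀ i, lam * x i ^ d ≤ appl T x i) :
    lam ≤ Finset.univ.sup' ⟨⟨0, hn⟩, Finset.mem_univ _⟩ (rowSum T) := by
  obtain ⟨q, -, hq⟩ := Finset.exists_max_image Finset.univ x ⟨⟨0, hn⟩, Finset.mem_univ _⟩
  obtain ⟨p, hp⟩ := exists_pos_coord hn hx
  have hxq : 0 < x q := lt_of_lt_of_le hp (hq p (Finset.mem_univ p))
  have h1 : lam * x q ^ d ≤ rowSum T q * x q ^ d :=
    le_trans (hfeas q) (appl_le hT hx.1 (fun i => hq i (Finset.mem_univ i)) q)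
  have h2 : lam ≤ rowSum T q := le_of_mul_le_mul_right
    (by simpa [mul_comm] using h1) (pow_pos hxq d)
  exact le_trans h2 (Finset.le_sup' _ (Finset.mem_univ q))

/-- min row sum lower bound from a strictly positive eigenvector -/
lemma inf_le_eig (hn : 0 < n) {T : Fin n → (Fin d → Fin n) → ℝ}
    (hT : ∀ i j, 0 ≤ T i j) {x : Fin n → ℝ} (hx : ∀ i, 0 < x i)
    {lam : ℝ} (heig : ∀ i, appl T x i = lam * x i ^ d) :
    Finset.univ.inf' ⟨⟨0, hn⟩, Finset.mem_univ _⟩ (rowSum T) ≤ lam := by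
  obtain ⟨q, -, hq⟩ := Finset.exists_min_image Finset.univ x ⟨⟨0, hn⟩, Finset.mem_univ _⟩
  have h1 : rowSum T q * x q ^ d ≤ lam * x q ^ d := by
    rw [← heig q]
    exact le_appl hT (le_of_lt (hx q)) (fun i => hq i (Finset.mem_univ i)) q
  have h2 : rowSum T q ≤ lam := le_of_mul_le_mul_right
    (by simpa [mul_comm] using h1) (pow_pos (hx q) d)
  exact le_trans (Finset.inf'_le _ (Finset.mem_univ q)) h2

/-- Perron–Frobenius existence for strictly positive tensors -/
lemma posCase (hn : 0 < n) (hd : 1 ≤ d)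
    (T : Fin n → (Fin d → Fin n) → ℝ) (hT : ∀ i j, 0 < T i j) :
    ∃ lam x, x ∈ stdSimplex ℝ (Fin n) ∧ (∀ i, 0 < x i) ∧ 0 ≤ lam ∧
      lam ≤ Finset.univ.sup' ⟨⟨0, hn⟩, Finset.mem_univ _⟩ (rowSum T) ∧
      (∀ i, appl T x i = lam * x i ^ d) := by
  have hne : (Finset.univ : Finset (Fin n)).Nonempty := ⟨⟨0, hn⟩, Finset.mem_univ _⟩
  have hT' : ∀ i j, 0 ≤ T i j := fun i j => le_of_lt (hT i j)
  set M := Finset.univ.sup' hne (rowSum T) with hM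
  have hM0 : 0 ≤ M := by
    refine le_trans ?_ (Finset.le_sup' (rowSum T) (Finset.mem_univ (⟨0, hn⟩ : Fin n)))
    exact Finset.sum_nonneg fun j _ => hT' _ j
  set K : Set (ℝ × (Fin n → ℝ)) := {p | p.2 ∈ stdSimplex ℝ (Fin n) ∧ p.1 ∈ Set.Icc 0 M ∧
    ∀ i, p.1 * p.2 i ^ d ≤ appl T p.2 i} with hK
  -- compactness of K
  have hKcl : IsClosed K := by
    have h1 : IsClosed {p : ℝ × (Fin n → ℝ) | p.2 ∈ stdSimplex ℝ (Fin n)} :=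
      (isClosed_stdSimplex ℝ (Fin n)).preimage continuous_snd
    have h2 : IsClosed {p : ℝ × (Fin n → ℝ) | p.1 ∈ Set.Icc 0 M} :=
      isClosed_Icc.preimage continuous_fst
    have h3 : IsClosed {p : ℝ × (Fin n → ℝ) | ∀ i, p.1 * p.2 i ^ d ≤ appl T p.2 i} := by
      have : {p : ℝ × (Fin n → ℝ) | ∀ i, p.1 * p.2 i ^ d ≤ appl T p.2 i} =
          ⋂ i, {p : ℝ × (Fin n → ℝ) | p.1 * p.2 i ^ d ≤ appl T p.2 i} := by
        ext p; simp
      rw [this]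
      refine isClosed_iInter fun i => isClosed_le ?_ ?_
      · exact continuous_fst.mul (((continuous_apply i).comp continuous_snd).pow d)
      · exact (continuous_appl T i).comp continuous_snd
    exact h1.inter (h2.inter h3)
  have hKcp : IsCompact K := by
    refine IsCompact.of_isClosed_subset
      ((isCompact_Icc (a := (0:ℝ)) (b := M)).prod (isCompact_stdSimplex ℝ (Fin n))) hKcl ?_
    exact fun p hp => ⟨hp.2.1, hp.1⟩
  have hu : (fun _ : Fin n => (n:ℝ)⁻¹) ∈ stdSimplex ℝ (Fin n) := by
    constructor
    · intro i; positivity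
    · rw [Finset.sum_const, Finset.card_univ, Fintype.card_fin]
      have : (n:ℝ) ≠ 0 := Nat.cast_ne_zero.2 hn.ne'
      rw [nsmul_eq_mul, mul_inv_cancel₀ this]
  have h0K : ((0:ℝ), fun _ : Fin n => (n:ℝ)⁻¹) ∈ K := by
    refine ⟨hu, ⟨le_refl 0, hM0⟩, fun i => ?_⟩
    simpa using appl_nonneg hT' (fun _ => by positivity) i
  obtain ⟨⟨lam, x⟩, hmem, hmax⟩ := hKcp.exists_isMaxOn ⟨_, h0K⟩ continuous_fst.continuousOn
  obtain ⟨hxS, ⟨hlam0, hlamM⟩, hfeas⟩ := hmem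
  dsimp only at hxS hfeas hlam0 hlamM
  have hx0 : ∀ i, 0 ≤ x i := hxS.1
  have happos : ∀ (y : Fin n → ℝ), (∀ m, 0 ≤ y m) → (∃ p, 0 < y p) →
      ∀ m, 0 < appl T y m := by
    rintro y hy ⟨p, hp⟩ m
    have hterm : 0 < T m (fun _ => p) * ∏ l : Fin d, y ((fun _ : Fin d => p) l) :=
      mul_pos (hT m _) (Finset.prod_pos fun l _ => hp)
    refine lt_of_lt_of_le hterm ?_
    exact Finset.single_le_sum (f := fun j : Fin d → Fin n => T m j * ∏ l, y (j l))
      (fun j _ => mul_nonneg (hT' m j) (Finset.prod_nonneg fun l _ => hy _))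
      (Finset.mem_univ _)
  have heig : ∀ i, appl T x i = lam * x i ^ d := by
    by_contra hcon
    push_neg at hcon
    obtain ⟨i₀, hne0⟩ := hcon
    have hstrict : lam * x i₀ ^ d < appl T x i₀ :=
      lt_of_le_of_ne (hfeas i₀) (fun h => hne0 h.symm)
    have hcont : ContinuousAt (fun t : ℝ => lam * (x i₀ + t) ^ d) 0 := by fun_prop
    have hstrict0 : lam * (x i₀ + 0) ^ d < appl T x i₀ := by simpa using hstrict
    have hev : ∀ᶠ t in nhds (0:ℝ), lam * (x i₀ + t) ^ d < appl T x i₀ :=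
      hcont.tendsto (Iio_mem_nhds hstrict0)
    obtain ⟨δ, hδmem, hδpos⟩ : ∃ δ : ℝ, lam * (x i₀ + δ) ^ d < appl T x i₀ ∧ 0 < δ := by
      have h2 := (hev.filter_mono (nhdsWithin_le_nhds (s := Set.Ioi (0:ℝ)))).and
        (eventually_mem_nhdsWithin (a := (0:ℝ)) (s := Set.Ioi 0))
      obtain ⟨t, ht1, ht2⟩ := h2.exists
      exact ⟨t, ht1, ht2⟩
    set y : Fin n → ℝ := Function.update x i₀ (x i₀ + δ) with hy
    have hyi₀ : y i₀ = x i₀ + δ := Function.update_self _ _ _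
    have hym : ∀ m, m ≠ i₀ → y m = x m := fun m hm => Function.update_of_ne hm _ _
    have hxy : ∀ m, x m ≤ y m := by
      intro m
      by_cases hm : m = i₀
      · subst hm; rw [hyi₀]; linarith
      · rw [hym m hm]
    have hy0 : ∀ m, 0 ≤ y m := fun m => le_trans (hx0 m) (hxy m)
    have hslack : ∀ m, lam * y m ^ d < appl T y m := by
      intro m
      by_cases hm : m = i₀
      · subst hm
        calc lam * y m ^ d = lam * (x m + δ) ^ d := by rw [hyi₀]
        _ < appl T x m := hδmem
        _ ≤ appl T y m := appl_mono hT' hx0 hxy m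
      · have hlt : appl T x m < appl T y m := by
          unfold appl
          apply Finset.sum_lt_sum
          · intro j _
            exact mul_le_mul_of_nonneg_left
              (Finset.prod_le_prod (fun l _ => hx0 (j l)) (fun l _ => hxy (j l))) (hT' m j)
          · refine ⟨fun _ => i₀, Finset.mem_univ _, ?_⟩
            refine mul_lt_mul_of_pos_left ?_ (hT m _)
            have h1 : x i₀ < y i₀ := by rw [hyi₀]; linarith
            have h2 : x i₀ ^ d < y i₀ ^ d :=
              pow_lt_pow_left₀ h1 (hx0 i₀) (Nat.one_le_iff_ne_zero.mp hd)
            calc (∏ _l : Fin d, x i₀) = x i₀ ^ d := by simp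
            _ < y i₀ ^ d := h2
            _ = ∏ _l : Fin d, y i₀ := by simp
        calc lam * y m ^ d = lam * x m ^ d := by rw [hym m hm]
        _ ≤ appl T x m := hfeas m
        _ < appl T y m := hlt
    set c := Finset.univ.inf' hne (fun m => (appl T y m - lam * y m ^ d) / (y m ^ d + 1))
      with hcdef
    have hc : 0 < c := by
      rw [hcdef, Finset.lt_inf'_iff]
      intro m _
      exact div_pos (sub_pos.2 (hslack m)) (by have := pow_nonneg (hy0 m) d; linarith)
    have hyfeas : ∀ m, (lam + c) * y m ^ d ≤ appl T y m := by
      intro m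
      have h2 : (0:ℝ) < y m ^ d + 1 := by have := pow_nonneg (hy0 m) d; linarith
      have h3 : c ≤ (appl T y m - lam * y m ^ d) / (y m ^ d + 1) :=
        Finset.inf'_le _ (Finset.mem_univ m)
      have h4 : c * (y m ^ d + 1) ≤ appl T y m - lam * y m ^ d := (le_div_iff₀ h2).1 h3
      have h5 : (0:ℝ) ≤ y m ^ d := pow_nonneg (hy0 m) d
      nlinarith [mul_nonneg hc.le h5]
    set sY := ∑ m, y m with hsY
    have hs1 : 1 ≤ sY := by
      rw [hsY]
      calc (1:ℝ) = ∑ m, x m := hxS.2.symm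
      _ ≤ ∑ m, y m := Finset.sum_le_sum fun m _ => hxy m
    have hspos : (0:ℝ) < sY := lt_of_lt_of_le one_pos hs1
    set z : Fin n → ℝ := fun m => sY⁻¹ * y m with hz
    have hzS : z ∈ stdSimplex ℝ (Fin n) := by
      constructor
      · intro m; exact mul_nonneg (inv_nonneg.2 hspos.le) (hy0 m)
      · rw [hz]
        simp only []
        rw [← Finset.mul_sum, ← hsY]
        field_simp
    have hzfeas : ∀ m, (lam + c) * z m ^ d ≤ appl T z m := by
      intro m
      have happz : appl T z m = sY⁻¹ ^ d * appl T y m := appl_smul T y sY⁻¹ m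
      have h6 : (0:ℝ) ≤ sY⁻¹ ^ d := by positivity
      calc (lam + c) * z m ^ d = sY⁻¹ ^ d * ((lam + c) * y m ^ d) := by
            rw [hz]; ring
      _ ≤ sY⁻¹ ^ d * appl T y m := mul_le_mul_of_nonneg_left (hyfeas m) h6
      _ = appl T z m := happz.symm
    have hcK : ((lam + c), z) ∈ K := by
      refine ⟨hzS, ⟨?_, ?_⟩, hzfeas⟩
      · show (0:ℝ) ≤ lam + c
        linarith
      · exact feasible_le_sup hn hT' hzS hzfeas
    have hle : lam + c ≤ lam := hmax hcK
    linarith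
  have hxpos : ∀ m, 0 < x m := by
    intro m
    rcases lt_or_eq_of_le (hx0 m) with h | h
    · exact h
    · exfalso
      have h1 : appl T x m = 0 := by
        rw [heig m, ← h, zero_pow (Nat.one_le_iff_ne_zero.mp hd), mul_zero]
      have h2 := happos x hx0 (exists_pos_coord hn hxS) m
      linarith
  exact ⟨lam, x, hxS, hxpos, hlam0, hlamM, heig⟩

/-- eigenpair existence with eigenvalue at least the min row sum, for nonnegative tensors -/
lemma nonnegCase (hn : 0 < n) (hd : 1 ≤ d)
    (T : Fin n → (Fin d → Fin n) → ℝ) (hT : ∀ i j, 0 ≤ T i j) :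
    ∃ lam x, x ∈ stdSimplex ℝ (Fin n) ∧
      Finset.univ.inf' ⟨⟨0, hn⟩, Finset.mem_univ _⟩ (rowSum T) ≤ lam ∧
      (∀ i, appl T x i = lam * x i ^ d) := by
  have hne : (Finset.univ : Finset (Fin n)).Nonempty := ⟨⟨0, hn⟩, Finset.mem_univ _⟩
  set r := Finset.univ.inf' hne (rowSum T) with hr
  set N := (Fintype.card (Fin d → Fin n) : ℝ) with hN
  have hN0 : 0 ≤ N := Nat.cast_nonneg _
  set B := Finset.univ.sup' hne (rowSum T) + N with hB
  set e : ℕ → ℝ := fun m => 1 / (m + 1) with he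
  have hepos : ∀ m, 0 < e m := fun m => by positivity
  have hele : ∀ m, e m ≤ 1 := fun m => by
    rw [he]
    rw [div_le_one (by positivity)]
    have : (0:ℝ) ≤ (m:ℝ) := Nat.cast_nonneg m
    linarith
  set Tm : ℕ → Fin n → (Fin d → Fin n) → ℝ := fun m i j => T i j + e m with hTm
  have hrowTm : ∀ m i, rowSum (Tm m) i = rowSum T i + N * e m := by
    intro m i
    rw [rowSum, rowSum]
    rw [Finset.sum_add_distrib, Finset.sum_const, Finset.card_univ, nsmul_eq_mul]
  have H : ∀ m : ℕ, ∃ q : ℝ × (Fin n → ℝ), q.2 ∈ stdSimplex ℝ (Fin n) ∧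
      r ≤ q.1 ∧ q.1 ∈ Set.Icc 0 B ∧ ∀ i, appl (Tm m) q.2 i = q.1 * q.2 i ^ d := by
    intro m
    obtain ⟨lam, x, hxS, hxpos, hlam0, hlamle, heig⟩ :=
      posCase hn hd (Tm m) (fun i j => lt_of_lt_of_le (hepos m) (by
        have := hT i j; rw [hTm]; dsimp only; linarith))
    refine ⟨(lam, x), hxS, ?_, ⟨hlam0, ?_⟩, heig⟩
    · have h1 : Finset.univ.inf' ⟨⟨0, hn⟩, Finset.mem_univ _⟩ (rowSum (Tm m)) ≤ lam :=
        inf_le_eig hn (fun i j => by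
          have := hT i j; have := (hepos m).le; rw [hTm]; dsimp only; linarith) hxpos heig
      refine le_trans (Finset.le_inf' _ _ fun i _ => ?_) h1
      rw [hrowTm]
      have h4 : r ≤ rowSum T i := Finset.inf'_le _ (Finset.mem_univ i)
      have h5 : 0 ≤ N * e m := mul_nonneg hN0 (hepos m).le
      linarith
    · refine le_trans hlamle ?_
      rw [hB]
      refine le_trans (Finset.sup'_le _ _ fun i _ => ?_) (le_refl _)
      rw [hrowTm]
      have h2 : N * e m ≤ N * 1 := mul_le_mul_of_nonneg_left (hele m) hN0
      have h3 : rowSum T i ≤ Finset.univ.sup' hne (rowSum T) :=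
        Finset.le_sup' _ (Finset.mem_univ i)
      linarith
  choose q hq using H
  have hC : IsCompact ((Set.Icc (0:ℝ) B) ×ˢ stdSimplex ℝ (Fin n)) :=
    (isCompact_Icc).prod (isCompact_stdSimplex ℝ (Fin n))
  have hqC : ∀ m, q m ∈ (Set.Icc (0:ℝ) B) ×ˢ stdSimplex ℝ (Fin n) :=
    fun m => ⟨(hq m).2.2.1, (hq m).1⟩
  obtain ⟨a, haC, φ, hφ, hconv⟩ := hC.tendsto_subseq hqC
  have hlamconv : Filter.Tendsto (fun m => (q (φ m)).1) Filter.atTop (nhds a.1) :=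
    ((continuous_fst.tendsto a).comp hconv)
  have hxconv : ∀ i, Filter.Tendsto (fun m => (q (φ m)).2 i) Filter.atTop (nhds (a.2 i)) :=
    fun i => (((continuous_apply i).comp continuous_snd).tendsto a).comp hconv
  have hφtop : Filter.Tendsto φ Filter.atTop Filter.atTop := hφ.tendsto_atTop
  have heconv : Filter.Tendsto (fun m => e (φ m)) Filter.atTop (nhds 0) := by
    have h1 : Filter.Tendsto (fun m : ℕ => (1:ℝ) / (m + 1)) Filter.atTop (nhds 0) :=
      tendsto_one_div_add_atTop_nhds_zero_nat
    exact h1.comp hφtop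
  refine ⟨a.1, a.2, haC.2, ?_, ?_⟩
  · exact ge_of_tendsto' hlamconv (fun m => (hq (φ m)).2.1)
  · intro i
    have hkey : ∀ m, appl T ((q m).2) i + e m = (q m).1 * ((q m).2 i) ^ d := by
      intro m
      have h1 := (hq m).2.2.2 i
      have h2 : appl (Tm m) ((q m).2) i = appl T ((q m).2) i + e m * (∑ p, (q m).2 p) ^ d :=
        appl_add_const T ((q m).2) (e m) i
      rw [h1] at h2
      rw [(hq m).1.2] at h2
      rw [one_pow, mul_one] at h2
      linarith
    have hL : Filter.Tendsto (fun m => appl T ((q (φ m)).2) i + e (φ m)) Filter.atTop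
        (nhds (appl T a.2 i + 0)) := by
      refine Filter.Tendsto.add ?_ heconv
      exact ((continuous_appl T i).tendsto a.2).comp
        ((Continuous.tendsto continuous_snd a).comp hconv)
    have hR : Filter.Tendsto (fun m => (q (φ m)).1 * ((q (φ m)).2 i) ^ d) Filter.atTop
        (nhds (a.1 * (a.2 i) ^ d)) := hlamconv.mul ((hxconv i).pow d)
    have heq : (fun m => appl T ((q (φ m)).2) i + e (φ m)) =
        fun m => (q (φ m)).1 * ((q (φ m)).2 i) ^ d := funext fun m => hkey (φ m)
    rw [heq] at hL
    have := tendsto_nhds_unique hL hR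
    rw [add_zero] at this
    exact this

end Stmt4Aux

/-- For a `k`-th order `n`-dimensional nonnegative tensor `T` (entries
`T i j = T_{i,i₂,…,i_k}` with `j` the tuple of trailing indices), the spectral
radius `ρ` (the maximum modulus of an eigenvalue) is bounded between the
minimum and the maximum row sum. -/
theorem stmt4 (n k : ℕ) (hn : 0 < n) (hk : 2 ≤ k)
    (T : Fin n → (Fin (k - 1) → Fin n) → ℝ)
    (hT : ∀ i j, 0 ≤ T i j)
    (ρ : ℝ)
    (hρ : IsGreatest {r : ℝ | ∃ (lam : ℂ) (X : Fin n → ℂ), X ≠ 0 ∧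
      (∀ i : Fin n, ∑ j : Fin (k - 1) → Fin n,
        (T i j : ℂ) * ∏ l, X (j l) = lam * (X i) ^ (k - 1)) ∧
      ‖lam‖ = r} ρ) :
    Finset.univ.inf' ⟨⟨0, hn⟩, Finset.mem_univ _⟩ (fun i => ∑ j, T i j) ≤ ρ ∧
      ρ ≤ Finset.univ.sup' ⟨⟨0, hn⟩, Finset.mem_univ _⟩ (fun i => ∑ j, T i j) := by
  have hd : 1 ≤ k - 1 := by omega
  have hne : (Finset.univ : Finset (Fin n)).Nonempty := ⟨⟨0, hn⟩, Finset.mem_univ _⟩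
  constructor
  · -- lower bound
    obtain ⟨lam, x, hxS, hrle, heig⟩ := Stmt4Aux.nonnegCase hn hd T hT
    have hr0 : (0:ℝ) ≤
        Finset.univ.inf' ⟨⟨0, hn⟩, Finset.mem_univ _⟩ (Stmt4Aux.rowSum T) :=
      Finset.le_inf' _ _ fun i _ => Finset.sum_nonneg fun j _ => hT i j
    have hlam0 : 0 ≤ lam := le_trans hr0 hrle
    obtain ⟨p, hp⟩ := Stmt4Aux.exists_pos_coord hn hxS
    have hmem : lam ∈ {r : ℝ | ∃ (lam : ℂ) (X : Fin n → ℂ), X ≠ 0 ∧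
        (∀ i : Fin n, ∑ j : Fin (k - 1) → Fin n,
          (T i j : ℂ) * ∏ l, X (j l) = lam * (X i) ^ (k - 1)) ∧
        ‖lam‖ = r} := by
      refine ⟨(lam : ℂ), fun i => (x i : ℂ), ?_, ?_, ?_⟩
      · intro h
        have h2 := congrFun h p
        simp only [Pi.zero_apply, Complex.ofReal_eq_zero] at h2
        exact hp.ne' h2
      · intro i
        have h3 := heig i
        unfold Stmt4Aux.appl at h3
        calc ∑ j : Fin (k - 1) → Fin n, (T i j : ℂ) * ∏ l, ((x (j l) : ℝ) : ℂ)
            = ((∑ j : Fin (k - 1) → Fin n, T i j * ∏ l, x (j l) : ℝ) : ℂ) := by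
              push_cast; rfl
        _ = ((lam * x i ^ (k - 1) : ℝ) : ℂ) := by rw [h3]
        _ = (lam : ℂ) * ((x i : ℝ) : ℂ) ^ (k - 1) := by push_cast; rfl
      · simp [Complex.norm_real, Real.norm_eq_abs, abs_of_nonneg hlam0]
    exact le_trans hrle (hρ.2 hmem)
  · -- upper bound
    obtain ⟨lam, X, hX0, heq, habs⟩ := hρ.1
    obtain ⟨i, -, hi⟩ := Finset.exists_max_image Finset.univ
      (fun i => ‖X i‖) hne
    have hXi : 0 < ‖X i‖ := by
      by_contra h
      push_neg at h
      apply hX0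
      funext m
      have h1 : ‖X m‖ ≤ 0 := le_trans (hi m (Finset.mem_univ m)) h
      have h2 : ‖X m‖ = 0 := le_antisymm h1 (norm_nonneg _)
      simpa using h2
    have hup : ‖lam * X i ^ (k - 1)‖ ≤
        Stmt4Aux.rowSum T i * ‖X i‖ ^ (k - 1) := by
      rw [← heq i]
      calc ‖∑ j : Fin (k - 1) → Fin n, (T i j : ℂ) * ∏ l, X (j l)‖
          ≤ ∑ j : Fin (k - 1) → Fin n, ‖(T i j : ℂ) * ∏ l, X (j l)‖ :=
            norm_sum_le _ _
      _ ≤ ∑ j : Fin (k - 1) → Fin n, T i j * ‖X i‖ ^ (k - 1) := by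
            refine Finset.sum_le_sum fun j _ => ?_
            rw [norm_mul, Complex.norm_real, Real.norm_eq_abs, abs_of_nonneg (hT i j), norm_prod]
            refine mul_le_mul_of_nonneg_left ?_ (hT i j)
            calc ∏ l, ‖X (j l)‖
                ≤ ∏ _l : Fin (k - 1), ‖X i‖ :=
                  Finset.prod_le_prod (fun l _ => norm_nonneg _)
                    (fun l _ => hi (j l) (Finset.mem_univ _))
            _ = ‖X i‖ ^ (k - 1) := by simp
      _ = Stmt4Aux.rowSum T i * ‖X i‖ ^ (k - 1) := by
            rw [Stmt4Aux.rowSum, Finset.sum_mul]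
    have hup2 : ρ * ‖X i‖ ^ (k - 1) ≤
        Stmt4Aux.rowSum T i * ‖X i‖ ^ (k - 1) := by
      rw [← habs]
      calc ‖lam‖ * ‖X i‖ ^ (k - 1)
          = ‖lam * X i ^ (k - 1)‖ := by rw [norm_mul, norm_pow]
      _ ≤ _ := hup
    have h6 : ρ ≤ Stmt4Aux.rowSum T i :=
      le_of_mul_le_mul_right (by simpa [mul_comm] using hup2)
        (pow_pos hXi (k - 1))
    exact le_trans h6 (Finset.le_sup' _ (Finset.mem_univ i))
end

section
/- Let k ≥ 2, ρ > 1, s ≥ 1, t ≥ 0 be integers with s + t = k - 1, and let x_u, w, f be positive reals satisfying ρ f^{k-1} = f^{s-1} w^t x_u and ρ w^{k-1} = f^s w^{t-1} x_u + (w/ρ)^{k-1}. Then w = x_u / (ρ (1 - ρ^{-k})^{(t+1)/k}) and f = (1 - ρ^{-k})^{1/k} · w; in particular f < w. -/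
/-- Algebraic core of Lemma 3.15: the eigen-equations at the vertices of a
nonpendant edge with `t` attached pendant edges determine the eigenvector
values `w` (degree-2 vertices) and `f` (pendant vertices); in particular
`f < w`. -/
theorem stmt10 (k s t : ℕ) (hk : 2 ≤ k) (hs : 1 ≤ s) (hst : s + t = k - 1)
    (ρ xu w f : ℝ) (hρ : 1 < ρ) (hxu : 0 < xu) (hw : 0 < w) (hf : 0 < f)
    (h1 : ρ * f ^ (k - 1) = f ^ ((s : ℤ) - 1) * w ^ (t : ℤ) * xu)
    (h2 : ρ * w ^ (k - 1) = f ^ (s : ℤ) * w ^ ((t : ℤ) - 1) * xu + (w / ρ) ^ (k - 1)) :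
    w = xu / (ρ * (1 - ρ ^ (-(k : ℤ))) ^ (((t : ℝ) + 1) / (k : ℝ))) ∧
    f = (1 - ρ ^ (-(k : ℤ))) ^ ((1 : ℝ) / (k : ℝ)) * w ∧
    f < w := by
  have hρ0 : (0:ℝ) < ρ := by linarith
  obtain ⟨s', rfl⟩ : ∃ s', s = s' + 1 := ⟨s - 1, by omega⟩
  have hk2 : k = s' + t + 2 := by omega
  subst hk2
  have hK : s' + t + 2 - 1 = s' + t + 1 := rfl
  rw [hK] at h1 h2
  have hρk1 : 1 < ρ ^ (s' + t + 2) := one_lt_pow₀ hρ (by omega)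
  have hρk0 : (0:ℝ) < ρ ^ (s' + t + 2) := by positivity
  -- clean up the zpows
  have hs1 : ((s' + 1 : ℕ) : ℤ) - 1 = (s' : ℤ) := by push_cast; ring
  rw [hs1, zpow_natCast, zpow_natCast] at h1
  rw [zpow_sub_one₀ hw.ne', zpow_natCast, zpow_natCast] at h2
  -- from h1 : xu * w^t = ρ * f^(t+1)
  have e1 : f ^ s' * (w ^ t * xu) = f ^ s' * (ρ * f ^ (t + 1)) := by
    linear_combination -h1
  have e1' : w ^ t * xu = ρ * f ^ (t + 1) :=
    mul_left_cancel₀ (pow_ne_zero _ hf.ne') e1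
  have hxu' : xu = ρ * f ^ (t + 1) / w ^ t := by
    field_simp
    linear_combination e1'
  rw [hxu'] at h2
  -- the key power relation
  have E : w ^ t * (ρ ^ (s' + t + 2) * f ^ (s' + t + 2))
      = w ^ t * (ρ ^ (s' + t + 2) * w ^ (s' + t + 2) - w ^ (s' + t + 2)) := by
    field_simp at h2
    have hq : (w / ρ) ^ (s' + t + 1) * ρ ^ (s' + t + 1) = w ^ (s' + t + 1) := by
      rw [← mul_pow, div_mul_cancel₀ _ hρ0.ne']
    linear_combination (-w ^ t * ρ ^ (s' + t + 1)) * h2 - (w ^ t * w) * hq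
  have E' : ρ ^ (s' + t + 2) * f ^ (s' + t + 2)
      = ρ ^ (s' + t + 2) * w ^ (s' + t + 2) - w ^ (s' + t + 2) :=
    mul_left_cancel₀ (pow_ne_zero _ hw.ne') E
  have efk : f ^ (s' + t + 2) = (1 - (ρ ^ (s' + t + 2))⁻¹) * w ^ (s' + t + 2) := by
    field_simp
    linear_combination E'
  set c : ℝ := 1 - (ρ ^ (s' + t + 2))⁻¹ with hc
  have hc0 : 0 < c := by
    have : (ρ ^ (s' + t + 2))⁻¹ < 1 := inv_lt_one_of_one_lt₀ hρk1
    simp only [hc]; linarith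
  have hc1 : c < 1 := by
    have : 0 < (ρ ^ (s' + t + 2))⁻¹ := by positivity
    simp only [hc]; linarith
  have hceq : 1 - ρ ^ (-((s' + t + 2 : ℕ) : ℤ)) = c := by
    rw [zpow_neg, zpow_natCast]
  have hKne : ((s' + t + 2 : ℕ) : ℝ) ≠ 0 := by positivity
  -- f in terms of w
  have hfw : f = c ^ ((1 : ℝ) / ((s' + t + 2 : ℕ) : ℝ)) * w := by
    have h' : f = (f ^ (s' + t + 2)) ^ ((((s' + t + 2 : ℕ) : ℝ))⁻¹) :=
      (Real.pow_rpow_inv_natCast hf.le (by omega)).symm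
    rw [efk, Real.mul_rpow hc0.le (by positivity),
      Real.pow_rpow_inv_natCast hw.le (by omega)] at h'
    rw [one_div]
    exact h'
  have hcpow : 0 < c ^ (((t : ℝ) + 1) / ((s' + t + 2 : ℕ) : ℝ)) := Real.rpow_pos_of_pos hc0 _
  -- xu in terms of w
  have hxueq : xu = ρ * c ^ (((t : ℝ) + 1) / ((s' + t + 2 : ℕ) : ℝ)) * w := by
    have hcp : (c ^ ((1 : ℝ) / ((s' + t + 2 : ℕ) : ℝ))) ^ (t + 1)
        = c ^ (((t : ℝ) + 1) / ((s' + t + 2 : ℕ) : ℝ)) := by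
      rw [← Real.rpow_natCast (c ^ ((1 : ℝ) / ((s' + t + 2 : ℕ) : ℝ))) (t + 1),
        ← Real.rpow_mul hc0.le]
      congr 1
      push_cast
      field_simp
    rw [hxu', hfw, mul_pow, hcp]
    field_simp
    ring
  refine ⟨?_, ?_, ?_⟩
  · rw [hceq, hxueq]
    field_simp
  · rw [hceq]; exact hfw
  · rw [hfw]
    have : c ^ ((1 : ℝ) / ((s' + t + 2 : ℕ) : ℝ)) < 1 :=
      Real.rpow_lt_one hc0.le hc1 (by positivity)
    nlinarith
end
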